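/- Fix a β-sequence [·]_β and u ∈ 𝒫₀,₁, and let (P_n)_{n≥0} be the polynomial sequence determined by Σ_{n≥0} (1/[n]_β!) P_n(x) z^n = Σ_{k≥0} (1/[k]_β!) x^k u(z)^k in ℂ[x][[z]]. Then for every polynomial f ∈ ℂ[x], the formal power series f(u(z)) obtained by substituting u into f satisfies: the coefficient of z^n in f(u(z)) equals (1/[n]_β!)·(P_n(D_β) f)(0) for every n ≥ 0, where P_n(D_β) is the operator obtained by evaluating the polynomial P_n at the operator D_β and (·)(0) denotes evaluation of the resulting polynomial at 0. -/

import Mathlib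

/-- The β-factorial `[n]_β! = ∏_{i=1}^n [i]_β`. -/
noncomputable def betaFact (β : ℕ → ℝ) (n : ℕ) : ℝ := ∏ i ∈ Finset.range n, β (i + 1)

/-- for the polynomial sequence with β-generating function `exp_β(u(z)x)`,
`u ∈ 𝒫₀,₁`, and any polynomial `f`, the coefficient of `zⁿ` in `f(u(z))` equals
`(1/[n]_β!) · (P_n(D_β) f)(0)`. -/
theorem stmt_14 (β : ℕ → ℝ) (hβ0 : β 0 = 0) (hβ1 : β 1 = 1) (hβpos : ∀ n, 1 ≤ n → 0 < β n)
    (u : PowerSeries ℂ)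
    (hu0 : PowerSeries.constantCoeff u = 0) (hu1 : PowerSeries.coeff 1 u = 1)
    (P : ℕ → Polynomial ℂ)
    (hgen : ∀ n : ℕ, ((betaFact β n : ℂ))⁻¹ • P n =
      ∑ k ∈ Finset.range (n + 1),
        ((betaFact β k : ℂ))⁻¹ •
          (Polynomial.C (PowerSeries.coeff n (u ^ k)) * Polynomial.X ^ k))
    (D : Module.End ℂ (Polynomial ℂ))
    (hD : ∀ n : ℕ, D (Polynomial.X ^ n) = ((β n : ℂ)) • Polynomial.X ^ (n - 1)) :
    ∀ (f : Polynomial ℂ) (n : ℕ),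
      PowerSeries.coeff n (Polynomial.aeval u f) =
        ((betaFact β n : ℂ))⁻¹ * Polynomial.eval 0 ((Polynomial.aeval D (P n)) f) := by
  -- betaFact positivity / nonvanishing
  have hbfpos : ∀ k, 0 < betaFact β k := by
    intro k
    exact Finset.prod_pos fun i _ => hβpos (i + 1) (by omega)
  have hbf : ∀ k, ((betaFact β k : ℝ) : ℂ) ≠ 0 := by
    intro k
    exact_mod_cast (hbfpos k).ne'
  -- key: eval 0 of D^k X^m
  have key : ∀ k m : ℕ, Polynomial.eval 0 ((D ^ k) ((Polynomial.X : Polynomial ℂ) ^ m)) =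
      if k = m then ((betaFact β m : ℝ) : ℂ) else 0 := by
    intro k
    induction k with
    | zero =>
      intro m
      cases m with
      | zero => simp [betaFact]
      | succ m => simp
    | succ k ih =>
      intro m
      rw [pow_succ, Module.End.mul_apply, hD m, map_smul, Polynomial.eval_smul, smul_eq_mul,
        ih (m - 1)]
      cases m with
      | zero => simp [hβ0]
      | succ m =>
        simp only [Nat.succ_sub_one]
        by_cases h : k = m
        · subst h
          rw [if_pos rfl, if_pos rfl]
          have : betaFact β (k + 1) = betaFact β k * β (k + 1) := by
            simp [betaFact, Finset.prod_range_succ]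
          rw [this]
          push_cast
          ring
        · rw [if_neg h, if_neg (by omega), mul_zero]
  -- eval 0 of D^k applied to any polynomial
  have heval : ∀ (k : ℕ) (g : Polynomial ℂ),
      Polynomial.eval 0 ((D ^ k) g) = ((betaFact β k : ℝ) : ℂ) * g.coeff k := by
    intro k g
    induction g using Polynomial.induction_on' with
    | add p q hp hq => simp [map_add, hp, hq, mul_add]
    | monomial m a =>
      rw [← Polynomial.smul_X_eq_monomial, map_smul, Polynomial.eval_smul, smul_eq_mul, key,
        Polynomial.coeff_smul, Polynomial.coeff_X_pow, smul_eq_mul]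
      by_cases h : k = m
      · subst h; simp [mul_comm]
      · rw [if_neg h, if_neg (by omega)]; ring
  -- coefficients of P n from hgen
  have hcoeffP : ∀ (n j : ℕ), ((betaFact β n : ℝ) : ℂ)⁻¹ * (P n).coeff j =
      if j ≤ n then ((betaFact β j : ℝ) : ℂ)⁻¹ * PowerSeries.coeff n (u ^ j) else 0 := by
    intro n j
    have h := congrArg (fun p => Polynomial.coeff p j) (hgen n)
    simp only [Polynomial.coeff_smul, Polynomial.finset_sum_coeff, Polynomial.coeff_C_mul,
      Polynomial.coeff_X_pow, smul_eq_mul] at h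
    rw [h]
    rw [Finset.sum_congr rfl (fun k _ => by
      rw [show ((betaFact β k : ℝ) : ℂ)⁻¹ * ((PowerSeries.coeff n) (u ^ k) * if j = k then 1 else 0)
        = if k = j then ((betaFact β k : ℝ) : ℂ)⁻¹ * (PowerSeries.coeff n) (u ^ k) else 0 by
          by_cases hk : j = k
          · subst hk; simp
          · rw [if_neg hk, if_neg (Ne.symm hk)]; ring])]
    rw [Finset.sum_ite_eq' (Finset.range (n + 1)) j]
    simp [Nat.lt_succ_iff]
  -- vanishing coefficients of u^j
  intro f n
  have hu : ∀ j, n < j → (PowerSeries.coeff n) (u ^ j) = 0 := by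
    intro j hj
    have hX : (PowerSeries.X : PowerSeries ℂ) ∣ u := PowerSeries.X_dvd_iff.mpr hu0
    exact (PowerSeries.X_pow_dvd_iff.mp (pow_dvd_pow_of_dvd hX j)) n hj
  set N := max f.natDegree (max n (P n).natDegree) with hN
  -- LHS
  have hL : PowerSeries.coeff n (Polynomial.aeval u f) =
      ∑ j ∈ Finset.range (N + 1), f.coeff j * PowerSeries.coeff n (u ^ j) := by
    rw [Polynomial.aeval_eq_sum_range, map_sum]
    simp only [map_smul, smul_eq_mul]
    apply Finset.sum_subset
    · apply Finset.range_subset_range.mpr; omega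
    · intro j _ hj
      rw [Polynomial.coeff_eq_zero_of_natDegree_lt (by simp at hj; omega), zero_mul]
  -- RHS
  have hR : Polynomial.eval 0 ((Polynomial.aeval D (P n)) f) =
      ∑ j ∈ Finset.range (N + 1), (P n).coeff j * (((betaFact β j : ℝ) : ℂ) * f.coeff j) := by
    rw [Polynomial.aeval_eq_sum_range]
    rw [LinearMap.sum_apply]
    simp only [LinearMap.smul_apply, Polynomial.eval_finset_sum, Polynomial.eval_smul,
      smul_eq_mul, heval]
    apply Finset.sum_subset
    · apply Finset.range_subset_range.mpr; omega
    · intro j _ hj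
      rw [Polynomial.coeff_eq_zero_of_natDegree_lt (by simp at hj; omega), zero_mul]
  rw [hL, hR, Finset.mul_sum]
  apply Finset.sum_congr rfl
  intro j _
  rw [show ((betaFact β n : ℝ) : ℂ)⁻¹ * ((P n).coeff j * (((betaFact β j : ℝ) : ℂ) * f.coeff j))
    = (((betaFact β n : ℝ) : ℂ)⁻¹ * (P n).coeff j) * (((betaFact β j : ℝ) : ℂ) * f.coeff j) by ring,
    hcoeffP n j]
  by_cases hj : j ≤ n
  · rw [if_pos hj]
    field_simp [hbf j]
  · rw [if_neg hj, zero_mul, hu j (by omega), mul_zero]
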